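/- Let G be a finitely generated subgroup of a real vector space V and W ⊆ V a linear subspace. Then G ∩ W is a direct summand of G as an abelian group. -/

import Mathlib

/-- If G is a finitely generated subgroup of a real vector space V and W ⊆ V is a
linear subspace, then G ∩ W is a direct summand of G. -/
theorem stmt_7 {V : Type*} [AddCommGroup V] [Module ℝ V]
    (G : AddSubgroup V) (hG : G.FG) (W : Submodule ℝ V) :
    ∃ G'' : AddSubgroup V, G'' ≤ G ∧
      (G ⊓ W.toAddSubgroup) ⊔ G'' = G ∧ (G ⊓ W.toAddSubgroup) ⊓ G'' = ⊥ := by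
  classical
  set G' : Submodule ℤ V := AddSubgroup.toIntSubmodule G with hG'def
  have hG'fg : G'.FG := by
    rw [Submodule.fg_iff_addSubgroup_fg]
    simpa [hG'def] using hG
  haveI : Module.Finite ℤ G' :=
    Module.Finite.iff_fg.mpr hG'fg
  -- torsion-freeness of V ⧸ W as ℤ-module
  haveI : NoZeroSMulDivisors ℤ (V ⧸ W) := by
    constructor
    intro n x h
    rcases eq_or_ne n 0 with hn | hn
    · exact Or.inl hn
    · right
      have h' : (n : ℝ) • x = 0 := by
        rwa [Int.cast_smul_eq_zsmul]
      rcases smul_eq_zero.mp h' with h'' | h''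
      · exact absurd (by exact_mod_cast h'') hn
      · exact h''
  let f : G' →ₗ[ℤ] V ⧸ W := (W.mkQ.restrictScalars ℤ).comp G'.subtype
  have hf : ∀ x : G', f x = Submodule.Quotient.mk (x : V) := fun x => rfl
  let f' : G' →ₗ[ℤ] LinearMap.range f := f.rangeRestrict
  have hf'surj : Function.Surjective f' := f.surjective_rangeRestrict
  haveI : Module.Finite ℤ (LinearMap.range f) := Module.Finite.range f
  haveI : Module.Free ℤ (LinearMap.range f) := Module.free_of_finite_type_torsion_free'
  obtain ⟨g, hg⟩ := Module.projective_lifting_property f' LinearMap.id hf'surj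
  have hg' : ∀ y : LinearMap.range f, f' (g y) = y := fun y => LinearMap.congr_fun hg y
  have hfg : ∀ y : LinearMap.range f, f (g y) = (y : V ⧸ W) := by
    intro y
    have := congrArg (Subtype.val) (hg' y)
    simpa [f'] using this
  refine ⟨(Submodule.map (G'.subtype.comp g) ⊤).toAddSubgroup, ?_, ?_, ?_⟩
  · rintro a ⟨y, -, rfl⟩
    exact (g y).2
  · apply le_antisymm
    · refine sup_le inf_le_left ?_
      rintro a ⟨y, -, rfl⟩
      exact (g y).2
    · intro a ha
      rw [AddSubgroup.mem_sup]
      set x : G' := ⟨a, ha⟩ with hx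
      refine ⟨((x - g (f' x) : G') : V), ⟨(x - g (f' x)).2, ?_⟩,
        ((g (f' x) : G') : V), ⟨f' x, trivial, rfl⟩, by simp [hx]⟩
      · -- in W
        have : f (x - g (f' x)) = 0 := by
          rw [map_sub, hfg]
          simp [f']
        rw [hf] at this
        simpa using (Submodule.Quotient.mk_eq_zero W).mp this
  · rw [eq_bot_iff]
    rintro a ⟨⟨haG, haW⟩, y, -, rfl⟩
    have h0 : f (g y) = 0 := by
      rw [hf]
      exact (Submodule.Quotient.mk_eq_zero W).mpr haW
    rw [hfg] at h0
    have : y = 0 := Subtype.ext h0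
    simp [this]
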